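/- Let F : CohI^{n+1} → CohI be a normal functor. If ⟨Y₁,…,Yₙ⟩⟨X⟩x ∈ NF(∀(F)), where ⟨X⟩x is a point of the web of Tr(F(Y⃗,−)), i.e. a self-coherent normal form of the normal functor F(Y₁,…,Yₙ,−) : CohI → CohI, then ⟨Y₁,…,Yₙ,X⟩x ∈ NF(F). -/

import Mathlib

open CategoryTheory Limits

/-- A coherence space: a web together with a reflexive symmetric coherence relation. -/
structure CohSpace : Type 1 where
  web : Type
  coh : web → web → Prop
  refl : ∀ x, coh x x
  symm : ∀ {x y}, coh x y → coh y x

/-- An embedding of coherence spaces: an injection preserving and reflecting coherence. -/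
@[ext]
structure CohEmb (X Y : CohSpace) : Type where
  toFun : X.web → Y.web
  inj : Function.Injective toFun
  coh_iff : ∀ x x', X.coh x x' ↔ Y.coh (toFun x) (toFun x')

/-- The category `CohI` of coherence spaces and embeddings. -/
instance : Category CohSpace where
  Hom := CohEmb
  id X := ⟨id, fun _ _ h => h, fun _ _ => Iff.rfl⟩
  comp f g := ⟨g.toFun ∘ f.toFun, g.inj.comp f.inj,
    fun x x' => (f.coh_iff x x').trans (g.coh_iff _ _)⟩
  id_comp _ := rfl
  comp_id _ := rfl
  assoc _ _ _ := rfl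

/-- A clique: a set of pairwise coherent points. -/
def CohSpace.IsClique (X : CohSpace) (c : Set X.web) : Prop :=
  ∀ ⦃x⦄, x ∈ c → ∀ ⦃y⦄, y ∈ c → X.coh x y

/-- Linear negation (dual) of a coherence space. -/
def CohSpace.dual (X : CohSpace) : CohSpace where
  web := X.web
  coh x y := x = y ∨ ¬ X.coh x y
  refl _ := Or.inl rfl
  symm h := h.elim (fun h' => Or.inl h'.symm) (fun h' => Or.inr fun hc => h' (X.symm hc))

/-- Tensor product of coherence spaces. -/
def CohSpace.tens (X Y : CohSpace) : CohSpace where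
  web := X.web × Y.web
  coh p q := X.coh p.1 q.1 ∧ Y.coh p.2 q.2
  refl p := ⟨X.refl p.1, Y.refl p.2⟩
  symm h := ⟨X.symm h.1, Y.symm h.2⟩

/-- Direct sum (`⊕`) of coherence spaces. -/
def CohSpace.sum (X Y : CohSpace) : CohSpace where
  web := X.web ⊕ Y.web
  coh := Sum.LiftRel X.coh Y.coh
  refl x := by cases x with
    | inl a => exact Sum.LiftRel.inl (X.refl a)
    | inr b => exact Sum.LiftRel.inr (Y.refl b)
  symm h := by cases h with
    | inl h => exact Sum.LiftRel.inl (X.symm h)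
    | inr h => exact Sum.LiftRel.inr (Y.symm h)

/-- Linear implication `X ⊸ Y := (X ⊗ Y^⊥)^⊥`. -/
def CohSpace.lolly (X Y : CohSpace) : CohSpace := (X.tens Y.dual).dual

/-- The with connective `X & Y := (X^⊥ ⊕ Y^⊥)^⊥`. -/
def CohSpace.withc (X Y : CohSpace) : CohSpace := (X.dual.sum Y.dual).dual

/-- The one-point coherence space (interpretation of `1` and `⊥`). -/
def oneCoh : CohSpace where
  web := PUnit
  coh _ _ := True
  refl _ := trivial
  symm _ := trivial

/-- The empty coherence space (interpretation of `0` and `⊤`). -/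
def topCoh : CohSpace where
  web := Empty
  coh x _ := x.elim
  refl x := x.elim
  symm {x} _ := x.elim

/-- The induced embedding between duals. -/
def CohEmb.dualMap {X Y : CohSpace} (f : X ⟶ Y) : X.dual ⟶ Y.dual where
  toFun := f.toFun
  inj := f.inj
  coh_iff x x' := by
    constructor
    · rintro (rfl | h)
      · exact Or.inl rfl
      · exact Or.inr fun hc => h ((f.coh_iff _ _).2 hc)
    · rintro (h | h)
      · exact Or.inl (f.inj h)
      · exact Or.inr fun hc => h ((f.coh_iff _ _).1 hc)

/-- The induced embedding between tensor products. -/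
def CohEmb.tensMap {X X' Y Y' : CohSpace} (f : X ⟶ X') (g : Y ⟶ Y') :
    X.tens Y ⟶ X'.tens Y' where
  toFun := Prod.map f.toFun g.toFun
  inj := f.inj.prodMap g.inj
  coh_iff p q := and_congr (f.coh_iff _ _) (g.coh_iff _ _)

/-- The induced embedding between direct sums. -/
def CohEmb.sumMap {X X' Y Y' : CohSpace} (f : X ⟶ X') (g : Y ⟶ Y') :
    X.sum Y ⟶ X'.sum Y' where
  toFun := Sum.map f.toFun g.toFun
  inj := f.inj.sumMap g.inj
  coh_iff x x' := by
    constructor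
    · intro h
      cases h with
      | inl h => exact Sum.LiftRel.inl ((f.coh_iff _ _).1 h)
      | inr h => exact Sum.LiftRel.inr ((g.coh_iff _ _).1 h)
    · intro h
      cases x with
      | inl a => cases x' with
        | inl a' => exact Sum.LiftRel.inl ((f.coh_iff _ _).2 (by cases h; assumption))
        | inr b' => exact absurd h (by intro hh; cases hh)
      | inr b => cases x' with
        | inl a' => exact absurd h (by intro hh; cases hh)
        | inr b' => exact Sum.LiftRel.inr ((g.coh_iff _ _).2 (by cases h; assumption))

/-- Linear negation as a covariant endofunctor of `CohI`. -/
def dualFunctor : CohSpace ⥤ CohSpace where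
  obj := CohSpace.dual
  map := CohEmb.dualMap
  map_id _ := rfl
  map_comp _ _ := rfl

/-- Tensor as a functor on the product category. -/
def tensorFunctor : CohSpace × CohSpace ⥤ CohSpace where
  obj p := p.1.tens p.2
  map f := CohEmb.tensMap f.1 f.2
  map_id _ := rfl
  map_comp _ _ := rfl

/-- Sum as a functor on the product category. -/
def sumFunctor : CohSpace × CohSpace ⥤ CohSpace where
  obj p := p.1.sum p.2
  map f := CohEmb.sumMap f.1 f.2
  map_id p := by
    apply CohEmb.ext
    funext x
    cases x <;> rfl
  map_comp f g := by
    apply CohEmb.ext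
    funext x
    cases x <;> rfl

/-- The category `CohI^n`. -/
abbrev CohTuple (n : ℕ) := Fin n → CohSpace

/-- A normal functor: one preserving filtered colimits and finite pullbacks. -/
def IsNormalFunctor {C : Type*} {D : Type*} [Category C] [Category D] (F : C ⥤ D) : Prop :=
  PreservesFilteredColimits F ∧ PreservesLimitsOfShape WalkingCospan F

/-- The web functor `CohI ⥤ Set`. -/
def webF : CohSpace ⥤ Type where
  obj X := X.web
  map f := TypeCat.ofHom f.toFun
  map_id _ := rfl
  map_comp _ _ := rfl

/-- The category of elements of the web presheaf `|F|` of `F : CohI^n ⥤ CohI`. -/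
abbrev Elts {n : ℕ} (F : CohTuple n ⥤ CohSpace) := (F ⋙ webF).Elements

/-- `(X⃗, x)` is a normal form of `F`: its webs are finite and it is initial in its own
slice category of `El(|F|)`. -/
def IsNormalForm {n : ℕ} {F : CohTuple n ⥤ CohSpace} (e : Elts F) : Prop :=
  (∀ i, Finite (e.1 i).web) ∧
    ∀ (f : Elts F) (u : f ⟶ e), ∃! v : e ⟶ f, v ≫ u = 𝟙 e

/-- The pointwise dual functor `F^⊥`. -/
def dualF {n : ℕ} (F : CohTuple n ⥤ CohSpace) : CohTuple n ⥤ CohSpace := F ⋙ dualFunctor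

/-- The pointwise tensor functor `F ⊗ G`. -/
def tensF {n : ℕ} (F G : CohTuple n ⥤ CohSpace) : CohTuple n ⥤ CohSpace :=
  F.prod' G ⋙ tensorFunctor

/-- The pointwise sum functor `F ⊕ G`. -/
def sumF {n : ℕ} (F G : CohTuple n ⥤ CohSpace) : CohTuple n ⥤ CohSpace :=
  F.prod' G ⋙ sumFunctor

/-- The pointwise linear implication functor `F ⊸ G`. -/
def lollyF {n : ℕ} (F G : CohTuple n ⥤ CohSpace) : CohTuple n ⥤ CohSpace :=
  dualF (tensF F (dualF G))

/-- The degree of a normal functor: the supremum of the cardinalities of the webs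
occurring in its normal forms. -/
noncomputable def degree {n : ℕ} (F : CohTuple n ⥤ CohSpace) : ℕ∞ :=
  ⨆ (e : Elts F) (_ : IsNormalForm e) (i : Fin n), (Nat.card (e.1 i).web : ℕ∞)

/-- `F` sends coherence spaces with finite webs to coherence spaces with finite webs. -/
def PreservesFiniteWebs {n : ℕ} (F : CohTuple n ⥤ CohSpace) : Prop :=
  ∀ X : CohTuple n, (∀ i, Finite (X i).web) → Finite (F.obj X).web

/-- A finite normal functor: one preserving finiteness of webs and of finite degree. -/
def IsFiniteFunctor {n : ℕ} (F : CohTuple n ⥤ CohSpace) : Prop :=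
  PreservesFiniteWebs F ∧ degree F < ⊤

/-- `NF(F)`: the set of isomorphism classes of normal forms of `F`. -/
def NFSet {n : ℕ} (F : CohTuple n ⥤ CohSpace) :
    Set (Quotient (isIsomorphicSetoid (Elts F))) :=
  { q | ∃ e : Elts F, IsNormalForm e ∧ Quotient.mk _ e = q }

/-- A uniform family of cliques of `F : CohI^n ⥤ CohI`. -/
def IsUniformFamily {n : ℕ} (F : CohTuple n ⥤ CohSpace)
    (c : ∀ X : CohTuple n, Set (F.obj X).web) : Prop :=
  (∀ X, (F.obj X).IsClique (c X)) ∧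
    ∀ (X Y : CohTuple n) (ι : X ⟶ Y), c X = (F.map ι).toFun ⁻¹' c Y

/-- Coherence of two normal forms: all their instantiations along embeddings into a
common tuple are coherent. -/
def NFCoherent {n : ℕ} {F : CohTuple n ⥤ CohSpace} (e e' : Elts F) : Prop :=
  ∀ (Z : CohTuple n) (ι : e.1 ⟶ Z) (κ : e'.1 ⟶ Z),
    (F.obj Z).coh ((F.map ι).toFun e.2) ((F.map κ).toFun e'.2)

/-- A coherence space structure on a canonical finite web `Fin k`. -/
structure FinCohData where
  k : ℕ
  r : Fin k → Fin k → Prop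
  refl : ∀ i, r i i
  symm : ∀ {i j}, r i j → r j i

/-- The coherence space associated to a `FinCohData`. -/
def FinCohData.toCoh (d : FinCohData) : CohSpace where
  web := Fin d.k
  coh := d.r
  refl := d.refl
  symm := d.symm

/-- A canonical tuple of finite coherence spaces. -/
def canonTuple {n : ℕ} (d : Fin n → FinCohData) : CohTuple n := fun i => (d i).toCoh

/-- Self-coherent normal forms of `F` carried by canonical tuples of finite coherence
spaces; the web of the trace is the set of their isomorphism classes. -/
def CanonNF {n : ℕ} (F : CohTuple n ⥤ CohSpace) : Type :=
  Σ d : Fin n → FinCohData,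
    { x : (F.obj (canonTuple d)).web //
        IsNormalForm (F := F) ⟨canonTuple d, x⟩ ∧
          NFCoherent (F := F) ⟨canonTuple d, x⟩ ⟨canonTuple d, x⟩ }

/-- The element of `El(|F|)` carried by a canonical normal form. -/
def CanonNF.toElts {n : ℕ} {F : CohTuple n ⥤ CohSpace} (c : CanonNF F) : Elts F :=
  ⟨canonTuple c.1, c.2.1⟩

/-- Canonical normal forms are identified when isomorphic in `El(|F|)`. -/
def traceSetoid {n : ℕ} (F : CohTuple n ⥤ CohSpace) : Setoid (CanonNF F) :=
  (isIsomorphicSetoid (Elts F)).comap CanonNF.toElts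

/-- The trace `Tr(F)`: isomorphism classes of self-coherent normal forms, with the
coherence relation between normal forms. -/
def Tr {n : ℕ} (F : CohTuple n ⥤ CohSpace) : CohSpace where
  web := Quotient (traceSetoid F)
  coh q q' := ∃ c c' : CanonNF F,
    Quotient.mk (traceSetoid F) c = q ∧ Quotient.mk (traceSetoid F) c' = q' ∧
      NFCoherent c.toElts c'.toElts
  refl q := by
    obtain ⟨c, rfl⟩ := Quotient.exists_rep q
    exact ⟨c, c, rfl, rfl, c.2.2.2⟩
  symm h := by
    obtain ⟨c, c', h1, h2, h3⟩ := h
    exact ⟨c', c, h2, h1, fun Z ι κ => (F.obj Z).symm (h3 Z κ ι)⟩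

/-- The family of functors whose pointwise pairing computes `Z ↦ (X₁,…,Xₙ,Z)`. -/
def gfam {n : ℕ} (X : CohTuple n) (i : Fin (n + 1)) : CohTuple 1 ⥤ CohSpace :=
  if h : (i : ℕ) < n then (Functor.const (CohTuple 1)).obj (X ⟨i, h⟩)
  else Pi.eval (fun _ : Fin 1 => CohSpace) 0

/-- The partial application `F(X₁,…,Xₙ,−)` of `F : CohI^(n+1) ⥤ CohI`. -/
def partialApp {n : ℕ} (F : CohTuple (n + 1) ⥤ CohSpace) (X : CohTuple n) :
    CohTuple 1 ⥤ CohSpace :=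
  Functor.pi' (gfam X) ⋙ F

/-- The embedding `(X⃗, Z) ↪ (Y⃗, Z)` induced componentwise by `ι : X⃗ ↪ Y⃗`. -/
def extHom {n : ℕ} {X Y : CohTuple n} (ι : X ⟶ Y) (Z : CohTuple 1) (i : Fin (n + 1)) :
    (gfam X i).obj Z ⟶ (gfam Y i).obj Z := by
  by_cases h : (i : ℕ) < n
  · simp only [gfam, dif_pos h]
    exact ι ⟨i, h⟩
  · simp only [gfam, dif_neg h]
    exact 𝟙 (Z 0)

/-- The embedding `extHom` as a morphism in `CohI^(n+1)`. -/
def extHomPi {n : ℕ} {X Y : CohTuple n} (ι : X ⟶ Y) (Z : CohTuple 1) :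
    (Functor.pi' (gfam X)).obj Z ⟶ (Functor.pi' (gfam Y)).obj Z :=
  fun i => extHom ι Z i

/-- Transport along an object equality `G.obj X = Tr (partialApp F X)`. -/
def trWebCast {n : ℕ} {F : CohTuple (n + 1) ⥤ CohSpace} {G : CohTuple n ⥤ CohSpace}
    (h : ∀ X, G.obj X = Tr (partialApp F X)) (X : CohTuple n) :
    (Tr (partialApp F X)).web → (G.obj X).web :=
  fun q => cast (congrArg CohSpace.web (h X)).symm q

/-- `G` acts on embeddings the way `∀(F)` does: normal forms are transported by
keeping the bound variables and substituting along `ι` on the free ones. -/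
def ForallAction {n : ℕ} (F : CohTuple (n + 1) ⥤ CohSpace) (G : CohTuple n ⥤ CohSpace)
    (hobj : ∀ X, G.obj X = Tr (partialApp F X)) : Prop :=
  ∀ (X Y : CohTuple n) (ι : X ⟶ Y) (c : CanonNF (partialApp F X)),
    ∃ c' : CanonNF (partialApp F Y),
      (G.map ι).toFun (trWebCast hobj X (Quotient.mk (traceSetoid _) c))
          = trWebCast hobj Y (Quotient.mk (traceSetoid _) c') ∧
        c'.1 = c.1 ∧
        HEq c'.2.1 ((F.map (extHomPi ι (canonTuple c.1))).toFun c.2.1)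

/-- `G` is (a presentation of) the functor `∀(F)`. -/
def IsForallExtension {n : ℕ} (F : CohTuple (n + 1) ⥤ CohSpace)
    (G : CohTuple n ⥤ CohSpace) : Prop :=
  ∃ hobj : ∀ X, G.obj X = Tr (partialApp F X), ForallAction F G hobj

/-- The uniform family of cliques obtained by instantiating a clique of the trace. -/
def instFam {n : ℕ} (F : CohTuple n ⥤ CohSpace) (c : Set (Tr F).web) :
    ∀ X : CohTuple n, Set (F.obj X).web := fun X =>
  { x | ∃ (d : CanonNF F) (ι : canonTuple d.1 ⟶ X),
      Quotient.mk (traceSetoid F) d ∈ c ∧ (F.map ι).toFun d.2.1 = x }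

section Helpers

open CategoryTheory Limits

variable {n : ℕ}

lemma F_map_comp_apply {m : ℕ} (F : CohTuple m ⥤ CohSpace) {A B C : CohTuple m}
    (f : A ⟶ B) (g : B ⟶ C) (a : (F.obj A).web) :
    (F.map (f ≫ g)).toFun a = (F.map g).toFun ((F.map f).toFun a) := by
  rw [F.map_comp]; rfl

lemma F_map_id_apply {m : ℕ} (F : CohTuple m ⥤ CohSpace) (A : CohTuple m)
    (a : (F.obj A).web) : (F.map (𝟙 A)).toFun a = a := by
  rw [F.map_id]; rfl

/-- A point of a coherence space, as an embedding from the one-point space. -/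
def ptEmb {A : CohSpace} (a : A.web) : oneCoh ⟶ A :=
  ⟨fun _ => a, fun a b _ => Subsingleton.elim (α := PUnit) a b, fun _ _ => iff_of_true trivial (A.refl a)⟩

lemma cast_hom_eq {A B A' B' : CohSpace} (hA : A = A') (hB : B = B')
    (f : A ⟶ B) (g : A' ⟶ B') (h : HEq f g) :
    f = eqToHom hA ≫ g ≫ eqToHom hB.symm := by
  subst hA; subst hB
  rw [eq_of_heq h]; simp

lemma gfam_castSucc (Y : CohTuple n) (j : Fin n) :
    gfam Y j.castSucc = (Functor.const (CohTuple 1)).obj (Y j) := by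
  simp only [gfam]
  rw [dif_pos (show ((j.castSucc : Fin (n+1)) : ℕ) < n from j.isLt)]
  rfl

lemma gfam_last (Y : CohTuple n) :
    gfam Y (Fin.last n) = Pi.eval (fun _ : Fin 1 => CohSpace) 0 := by
  simp only [gfam]
  rw [dif_neg (by simp)]

lemma gfam_obj_castSucc (Y : CohTuple n) (Z : CohTuple 1) (j : Fin n) :
    (gfam Y j.castSucc).obj Z = Y j :=
  Functor.congr_obj (gfam_castSucc Y j) Z

lemma gfam_obj_last (Y : CohTuple n) (Z : CohTuple 1) :
    (gfam Y (Fin.last n)).obj Z = Z 0 :=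
  Functor.congr_obj (gfam_last Y) Z

lemma gfam_map_castSucc (Y : CohTuple n) {Z Z' : CohTuple 1} (τ : Z ⟶ Z') (j : Fin n) :
    (gfam Y j.castSucc).map τ
      = eqToHom (gfam_obj_castSucc Y Z j) ≫ 𝟙 (Y j) ≫ eqToHom (gfam_obj_castSucc Y Z' j).symm := by
  have := Functor.congr_hom (gfam_castSucc Y j) τ
  exact this

lemma gfam_map_last (Y : CohTuple n) {Z Z' : CohTuple 1} (τ : Z ⟶ Z') :
    (gfam Y (Fin.last n)).map τ
      = eqToHom (gfam_obj_last Y Z) ≫ τ 0 ≫ eqToHom (gfam_obj_last Y Z').symm := by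
  have := Functor.congr_hom (gfam_last Y) τ
  exact this

lemma extHom_castSucc_heq {X Y : CohTuple n} (ι : X ⟶ Y) (Z : CohTuple 1) (j : Fin n) :
    HEq (extHom ι Z j.castSucc) (ι j) := by
  simp only [extHom]
  rw [dif_pos (show ((j.castSucc : Fin (n+1)) : ℕ) < n from j.isLt)]
  rw [eq_mpr_eq_cast]
  exact cast_heq _ _

lemma extHom_last_heq {X Y : CohTuple n} (ι : X ⟶ Y) (Z : CohTuple 1) :
    HEq (extHom ι Z (Fin.last n)) (𝟙 (Z 0)) := by
  simp only [extHom]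
  rw [dif_neg (by simp)]
  rw [eq_mpr_eq_cast]
  exact cast_heq _ _

lemma extHom_castSucc_eq {X Y : CohTuple n} (ι : X ⟶ Y) (Z : CohTuple 1) (j : Fin n) :
    extHom ι Z j.castSucc
      = eqToHom (gfam_obj_castSucc X Z j) ≫ ι j ≫ eqToHom (gfam_obj_castSucc Y Z j).symm :=
  cast_hom_eq (gfam_obj_castSucc X Z j) (gfam_obj_castSucc Y Z j) _ _ (extHom_castSucc_heq ι Z j)

lemma extHom_last_eq {X Y : CohTuple n} (ι : X ⟶ Y) (Z : CohTuple 1) :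
    extHom ι Z (Fin.last n)
      = eqToHom (gfam_obj_last X Z) ≫ 𝟙 (Z 0) ≫ eqToHom (gfam_obj_last Y Z).symm :=
  cast_hom_eq (gfam_obj_last X Z) (gfam_obj_last Y Z) _ _ (extHom_last_heq ι Z)

lemma extHomPi_natural {X Y : CohTuple n} (ι : X ⟶ Y) {Z Z' : CohTuple 1} (τ : Z ⟶ Z') :
    extHomPi ι Z ≫ (Functor.pi' (gfam Y)).map τ
      = (Functor.pi' (gfam X)).map τ ≫ extHomPi ι Z' := by
  funext i
  induction i using Fin.lastCases with
  | last =>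
      show extHom ι Z (Fin.last n) ≫ (gfam Y (Fin.last n)).map τ
        = (gfam X (Fin.last n)).map τ ≫ extHom ι Z' (Fin.last n)
      rw [extHom_last_eq, extHom_last_eq, gfam_map_last, gfam_map_last]
      simp
  | cast j =>
      show extHom ι Z j.castSucc ≫ (gfam Y j.castSucc).map τ
        = (gfam X j.castSucc).map τ ≫ extHom ι Z' j.castSucc
      rw [extHom_castSucc_eq, extHom_castSucc_eq, gfam_map_castSucc, gfam_map_castSucc]
      simp

end Helpers
section Helpers2

open CategoryTheory Limits

variable {n : ℕ}

/-- A morphism of 1-tuples from a single embedding. -/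
def hom1 {A B : CohTuple 1} (g : A 0 ⟶ B 0) : A ⟶ B := fun j =>
  Fin.cases (motive := fun j => A j ⟶ B j) g (fun i => i.elim0) j

lemma hom1_zero {A B : CohTuple 1} (g : A 0 ⟶ B 0) : hom1 g 0 = g := rfl

lemma hom1_ext {A B : CohTuple 1} (f g : A ⟶ B) (h : f 0 = g 0) : f = g := by
  funext j
  have : j = 0 := Subsingleton.elim j 0
  subst this; exact h

lemma extHomPi_apply {X Y : CohTuple n} (ι : X ⟶ Y) (Z : CohTuple 1) (i : Fin (n+1)) :
    extHomPi ι Z i = extHom ι Z i := rfl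

lemma pi'_gfam_map_apply (Y : CohTuple n) {Z Z' : CohTuple 1} (τ : Z ⟶ Z') (i : Fin (n+1)) :
    ((Functor.pi' (gfam Y)).map τ) i = (gfam Y i).map τ := rfl

lemma pi'_gfam_obj_apply (Y : CohTuple n) (Z : CohTuple 1) (i : Fin (n+1)) :
    ((Functor.pi' (gfam Y)).obj Z) i = (gfam Y i).obj Z := rfl

/-- The substitution square is a pullback in `CohI^(n+1)`. -/
def gfamPullback {X Y : CohTuple n} (ι : X ⟶ Y) {Z Z' : CohTuple 1} (τ : Z ⟶ Z') :
    IsLimit (PullbackCone.mk (extHomPi ι Z) ((Functor.pi' (gfam X)).map τ)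
      (extHomPi_natural ι τ) :
        PullbackCone ((Functor.pi' (gfam Y)).map τ) (extHomPi ι Z')) := by
  refine PullbackCone.IsLimit.mk _
    (fun s => fun i => Fin.lastCases
      (motive := fun i => s.pt i ⟶ ((Functor.pi' (gfam X)).obj Z) i)
      (s.fst (Fin.last n) ≫ eqToHom (gfam_obj_last Y Z) ≫ eqToHom (gfam_obj_last X Z).symm)
      (fun j => s.snd j.castSucc ≫ eqToHom (gfam_obj_castSucc X Z' j)
        ≫ eqToHom (gfam_obj_castSucc X Z j).symm) i) ?_ ?_ ?_
  · intro s
    funext i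
    have hc := congrFun s.condition i
    simp only [Pi.comp_apply, extHomPi_apply, pi'_gfam_map_apply] at hc ⊢
    induction i using Fin.lastCases with
    | last =>
        rw [Fin.lastCases_last, extHom_last_eq]
        delta Functor.pi'
        simp
    | cast j =>
        rw [Fin.lastCases_castSucc, extHom_castSucc_eq]
        rw [gfam_map_castSucc, extHom_castSucc_eq] at hc
        calc (s.snd j.castSucc ≫ eqToHom (gfam_obj_castSucc X Z' j)
                ≫ eqToHom (gfam_obj_castSucc X Z j).symm)
              ≫ eqToHom (gfam_obj_castSucc X Z j) ≫ ι j ≫ eqToHom (gfam_obj_castSucc Y Z j).symm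
            = (s.snd j.castSucc ≫ eqToHom (gfam_obj_castSucc X Z' j) ≫ ι j
                ≫ eqToHom (gfam_obj_castSucc Y Z' j).symm)
              ≫ eqToHom (gfam_obj_castSucc Y Z' j) ≫ eqToHom (gfam_obj_castSucc Y Z j).symm := by
              simp
          _ = (s.fst j.castSucc ≫ eqToHom (gfam_obj_castSucc Y Z j) ≫ 𝟙 (Y j)
                ≫ eqToHom (gfam_obj_castSucc Y Z' j).symm)
              ≫ eqToHom (gfam_obj_castSucc Y Z' j) ≫ eqToHom (gfam_obj_castSucc Y Z j).symm := by
              exact congrArg (fun k => k ≫ _) hc.symm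
          _ = @id (_ ⟶ (gfam Y j.castSucc).obj Z) (s.fst j.castSucc) := by delta Functor.pi'; simp
  · intro s
    funext i
    have hc := congrFun s.condition i
    simp only [Pi.comp_apply, extHomPi_apply, pi'_gfam_map_apply] at hc ⊢
    induction i using Fin.lastCases with
    | last =>
        rw [Fin.lastCases_last, gfam_map_last]
        rw [gfam_map_last, extHom_last_eq] at hc
        calc (s.fst (Fin.last n) ≫ eqToHom (gfam_obj_last Y Z) ≫ eqToHom (gfam_obj_last X Z).symm)
              ≫ eqToHom (gfam_obj_last X Z) ≫ τ 0 ≫ eqToHom (gfam_obj_last X Z').symm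
            = (s.fst (Fin.last n) ≫ eqToHom (gfam_obj_last Y Z) ≫ τ 0
                ≫ eqToHom (gfam_obj_last Y Z').symm)
              ≫ eqToHom (gfam_obj_last Y Z') ≫ eqToHom (gfam_obj_last X Z').symm := by simp
          _ = (s.snd (Fin.last n) ≫ eqToHom (gfam_obj_last X Z') ≫ 𝟙 (Z' 0)
                ≫ eqToHom (gfam_obj_last Y Z').symm)
              ≫ eqToHom (gfam_obj_last Y Z') ≫ eqToHom (gfam_obj_last X Z').symm := by exact congrArg (fun k => k ≫ _) hc
          _ = @id (_ ⟶ (gfam X (Fin.last n)).obj Z') (s.snd (Fin.last n)) := by delta Functor.pi'; simp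
    | cast j =>
        rw [Fin.lastCases_castSucc, gfam_map_castSucc]
        delta Functor.pi'
        simp
  · intro s m hm1 hm2
    funext i
    have h1 := congrFun hm1 i
    have h2 := congrFun hm2 i
    simp only [Pi.comp_apply, extHomPi_apply, pi'_gfam_map_apply] at h1 h2 ⊢
    induction i using Fin.lastCases with
    | last =>
        rw [extHom_last_eq] at h1
        rw [Fin.lastCases_last, ← h1]
        delta Functor.pi'
        beta_reduce
        simp
        erw [Category.assoc, eqToHom_trans, eqToHom_refl, Category.comp_id]
    | cast j =>
        rw [gfam_map_castSucc] at h2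
        rw [Fin.lastCases_castSucc, ← h2]
        delta Functor.pi'
        beta_reduce
        simp
        erw [Category.assoc, eqToHom_trans, eqToHom_refl, Category.comp_id]

end Helpers2
section Helpers3

open CategoryTheory Limits

variable {n : ℕ}

lemma push_natural (F : CohTuple (n+1) ⥤ CohSpace) {X Y : CohTuple n} (ι : X ⟶ Y)
    {V V' : CohTuple 1} (τ : V ⟶ V') (w : (F.obj ((Functor.pi' (gfam X)).obj V)).web) :
    (F.map (extHomPi ι V')).toFun ((F.map ((Functor.pi' (gfam X)).map τ)).toFun w)
      = (F.map ((Functor.pi' (gfam Y)).map τ)).toFun ((F.map (extHomPi ι V)).toFun w) := by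
  rw [← F_map_comp_apply, ← F_map_comp_apply, extHomPi_natural]

lemma exists_pullback_point (F : CohTuple (n+1) ⥤ CohSpace)
    [PreservesLimitsOfShape WalkingCospan F]
    {X Y : CohTuple n} (ι : X ⟶ Y) {Z Z' : CohTuple 1} (τ : Z ⟶ Z')
    (xv : (F.obj ((Functor.pi' (gfam Y)).obj Z)).web)
    (zv : (F.obj ((Functor.pi' (gfam X)).obj Z')).web)
    (hcomm : (F.map ((Functor.pi' (gfam Y)).map τ)).toFun xv
        = (F.map (extHomPi ι Z')).toFun zv) :
    ∃ t : (F.obj ((Functor.pi' (gfam X)).obj Z)).web,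
      (F.map (extHomPi ι Z)).toFun t = xv ∧
        (F.map ((Functor.pi' (gfam X)).map τ)).toFun t = zv := by
  have pb := isLimitPullbackConeMapOfIsLimit F (extHomPi_natural ι τ) (gfamPullback ι τ)
  have comm2 : ptEmb xv ≫ F.map ((Functor.pi' (gfam Y)).map τ)
      = ptEmb zv ≫ F.map (extHomPi ι Z') := by
    apply CohEmb.ext; funext _; exact hcomm
  obtain ⟨l, h1, h2⟩ := PullbackCone.IsLimit.lift' pb (ptEmb xv) (ptEmb zv) comm2
  exact ⟨l.toFun PUnit.unit, congrFun (congrArg CohEmb.toFun h1) PUnit.unit,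
    congrFun (congrArg CohEmb.toFun h2) PUnit.unit⟩

lemma nf_transfer (F : CohTuple (n+1) ⥤ CohSpace) {X Y : CohTuple n} (ι : X ⟶ Y)
    (V : CohTuple 1) (t : ((partialApp F X).obj V).web)
    (h : IsNormalForm (F := partialApp F Y) ⟨V, (F.map (extHomPi ι V)).toFun t⟩) :
    IsNormalForm (F := partialApp F X) ⟨V, t⟩ := by
  constructor
  · exact h.1
  · intro g m
    have mc : (F.map ((Functor.pi' (gfam Y)).map m.1)).toFun
        ((F.map (extHomPi ι g.1)).toFun g.2) = (F.map (extHomPi ι V)).toFun t := by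
      erw [← push_natural]
      exact congrArg (F.map (extHomPi ι V)).toFun m.2
    obtain ⟨vv, hvv, huniq⟩ := h.2 ⟨g.1, (F.map (extHomPi ι g.1)).toFun g.2⟩ ⟨m.1, mc⟩
    refine ⟨⟨vv.1, ?_⟩, ?_, ?_⟩
    · apply (F.map (extHomPi ι g.1)).inj
      show (F.map (extHomPi ι g.1)).toFun
        ((F.map ((Functor.pi' (gfam X)).map vv.1)).toFun t) = _
      erw [push_natural]
      exact vv.2
    · have h0 : vv.1 ≫ m.1 = 𝟙 V := congrArg Subtype.val hvv
      exact Subtype.ext h0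
    · intro s' hs'
      apply Subtype.ext
      have hY : (F.map ((Functor.pi' (gfam Y)).map s'.1)).toFun
          ((F.map (extHomPi ι V)).toFun t) = (F.map (extHomPi ι g.1)).toFun g.2 := by
        erw [← push_natural]
        exact congrArg (F.map (extHomPi ι g.1)).toFun s'.2
      have h0 : s'.1 ≫ m.1 = 𝟙 V := congrArg Subtype.val hs'
      have h1 : s'.1 = vv.1 := congrArg Subtype.val (huniq ⟨s'.1, hY⟩ (Subtype.ext h0))
      exact h1

lemma coh_transfer (F : CohTuple (n+1) ⥤ CohSpace) {X Y : CohTuple n} (ι : X ⟶ Y)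
    {V V' : CohTuple 1} (t : ((partialApp F X).obj V).web) (s : ((partialApp F X).obj V').web)
    (h : NFCoherent (F := partialApp F Y) ⟨V, (F.map (extHomPi ι V)).toFun t⟩
      ⟨V', (F.map (extHomPi ι V')).toFun s⟩) :
    NFCoherent (F := partialApp F X) ⟨V, t⟩ ⟨V', s⟩ := by
  intro Z a b
  have hY := h Z a b
  show ((F.obj ((Functor.pi' (gfam X)).obj Z))).coh
    ((F.map ((Functor.pi' (gfam X)).map a)).toFun t)
    ((F.map ((Functor.pi' (gfam X)).map b)).toFun s)
  refine ((F.map (extHomPi ι Z)).coh_iff _ _).mpr ?_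
  erw [push_natural, push_natural]
  exact hY

end Helpers3
section Helpers4

open CategoryTheory Limits

variable {n : ℕ}

/-- The free part of a tuple. -/
abbrev freeTuple (f1 : CohTuple (n+1)) : CohTuple n := fun j => f1 j.castSucc

/-- The bound part of a tuple, as a 1-tuple. -/
abbrev boundTuple (f1 : CohTuple (n+1)) : CohTuple 1 := fun _ => f1 (Fin.last n)

/-- The canonical identification of a tuple with its gfam-presentation. -/
def tupleToGfam (f1 : CohTuple (n+1)) :
    f1 ⟶ (Functor.pi' (gfam (freeTuple f1))).obj (boundTuple f1) := fun i =>
  Fin.lastCases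
    (motive := fun i => f1 i ⟶ ((Functor.pi' (gfam (freeTuple f1))).obj (boundTuple f1)) i)
    (eqToHom (gfam_obj_last (freeTuple f1) (boundTuple f1)).symm)
    (fun j => eqToHom (gfam_obj_castSucc (freeTuple f1) (boundTuple f1) j).symm) i

/-- The free components of a morphism into a gfam-presented tuple. -/
def uhFree {Y : CohTuple n} {f1 : CohTuple (n+1)} (V : CohTuple 1)
    (uh : f1 ⟶ (Functor.pi' (gfam Y)).obj V) : freeTuple f1 ⟶ Y :=
  fun j => uh j.castSucc ≫ eqToHom (gfam_obj_castSucc Y V j)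

/-- The bound component of a morphism into a gfam-presented tuple. -/
def uhBound {Y : CohTuple n} {f1 : CohTuple (n+1)} (V : CohTuple 1)
    (uh : f1 ⟶ (Functor.pi' (gfam Y)).obj V) : f1 (Fin.last n) ⟶ V 0 :=
  uh (Fin.last n) ≫ eqToHom (gfam_obj_last Y V)

lemma uh_decomp {Y : CohTuple n} {f1 : CohTuple (n+1)} (V : CohTuple 1)
    (uh : f1 ⟶ (Functor.pi' (gfam Y)).obj V) :
    tupleToGfam f1 ≫ extHomPi (uhFree V uh) (boundTuple f1)
      ≫ (Functor.pi' (gfam Y)).map (hom1 (A := boundTuple f1) (B := V) (uhBound (Y := Y) V uh)) = uh := by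
  funext i
  simp only [Pi.comp_apply, extHomPi_apply, pi'_gfam_map_apply]
  induction i using Fin.lastCases with
  | last =>
      rw [show tupleToGfam f1 (Fin.last n)
          = eqToHom (gfam_obj_last (freeTuple f1) (boundTuple f1)).symm by
        simp [tupleToGfam]; rfl]
      rw [extHom_last_eq, gfam_map_last, hom1_zero, uhBound]
      delta Functor.pi'
      beta_reduce
      simp
      erw [Category.assoc, eqToHom_trans, eqToHom_refl, Category.comp_id]
  | cast j =>
      rw [show tupleToGfam f1 j.castSucc
          = eqToHom (gfam_obj_castSucc (freeTuple f1) (boundTuple f1) j).symm by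
        simp [tupleToGfam]; rfl]
      rw [extHom_castSucc_eq]
      rw [show uhFree V uh j = uh j.castSucc ≫ eqToHom (gfam_obj_castSucc Y V j) from rfl]
      rw [gfam_map_castSucc]
      delta Functor.pi'
      beta_reduce
      simp
      erw [Category.assoc, eqToHom_trans, eqToHom_refl, Category.comp_id]

/-- Assemble a morphism out of a gfam-presented tuple from its parts. -/
def assembleV {Y : CohTuple n} {f1 : CohTuple (n+1)} (V : CohTuple 1)
    (ρ : Y ⟶ freeTuple f1) (σ0 : V 0 ⟶ f1 (Fin.last n)) :
    (Functor.pi' (gfam Y)).obj V ⟶ f1 := fun i =>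
  Fin.lastCases (motive := fun i => ((Functor.pi' (gfam Y)).obj V) i ⟶ f1 i)
    (eqToHom (gfam_obj_last Y V) ≫ σ0)
    (fun j => eqToHom (gfam_obj_castSucc Y V j) ≫ ρ j) i

lemma assembleV_sect {Y : CohTuple n} {f1 : CohTuple (n+1)} (V : CohTuple 1)
    (uh : f1 ⟶ (Functor.pi' (gfam Y)).obj V)
    (ρ : Y ⟶ freeTuple f1) (σ0 : V 0 ⟶ f1 (Fin.last n))
    (hρ : ρ ≫ uhFree V uh = 𝟙 Y) (hσ : σ0 ≫ uhBound V uh = 𝟙 (V 0)) :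
    assembleV V ρ σ0 ≫ uh = 𝟙 ((Functor.pi' (gfam Y)).obj V) := by
  funext i
  simp only [Pi.comp_apply, Pi.id_apply]
  induction i using Fin.lastCases with
  | last =>
      rw [show assembleV V ρ σ0 (Fin.last n) = eqToHom (gfam_obj_last Y V) ≫ σ0 by
        simp [assembleV]; rfl]
      have h0 : σ0 ≫ uh (Fin.last n) ≫ eqToHom (gfam_obj_last Y V) = 𝟙 (V 0) := hσ
      erw [← Category.assoc, comp_eqToHom_iff] at h0
      erw [Category.assoc, h0]
      simp
      erw [eqToHom_trans, eqToHom_refl]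
  | cast j =>
      rw [show assembleV V ρ σ0 j.castSucc = eqToHom (gfam_obj_castSucc Y V j) ≫ ρ j by
        simp [assembleV]; rfl]
      have h0 : ρ j ≫ (uh j.castSucc ≫ eqToHom (gfam_obj_castSucc Y V j)) = 𝟙 (Y j) :=
        congrFun hρ j
      erw [← Category.assoc, comp_eqToHom_iff] at h0
      erw [Category.assoc, h0]
      simp
      erw [eqToHom_trans, eqToHom_refl]

lemma decomposeV_eq {Y : CohTuple n} {f1 : CohTuple (n+1)} (V : CohTuple 1)
    (v1 : (Functor.pi' (gfam Y)).obj V ⟶ f1) :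
    v1 = assembleV V (fun j => eqToHom (gfam_obj_castSucc Y V j).symm ≫ v1 j.castSucc)
      (eqToHom (gfam_obj_last Y V).symm ≫ v1 (Fin.last n)) := by
  funext i
  induction i using Fin.lastCases with
  | last =>
      rw [show assembleV V _ _ (Fin.last n)
          = eqToHom (gfam_obj_last Y V) ≫ eqToHom (gfam_obj_last Y V).symm ≫ v1 (Fin.last n) by
        simp [assembleV]; rfl]
      delta Functor.pi'
      beta_reduce
      simp
      erw [← Category.assoc, eqToHom_trans, eqToHom_refl, Category.id_comp]
  | cast j =>
      rw [show assembleV V _ _ j.castSucc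
          = eqToHom (gfam_obj_castSucc Y V j)
            ≫ eqToHom (gfam_obj_castSucc Y V j).symm ≫ v1 j.castSucc by
        simp [assembleV]; rfl]
      delta Functor.pi'
      beta_reduce
      simp
      erw [← Category.assoc, eqToHom_trans, eqToHom_refl, Category.id_comp]

end Helpers4
section Helpers5

open CategoryTheory Limits

variable {n : ℕ}

lemma recompose_free {Y : CohTuple n} {f1 : CohTuple (n+1)} (V : CohTuple 1)
    (uh : f1 ⟶ (Functor.pi' (gfam Y)).obj V)
    (v1 : (Functor.pi' (gfam Y)).obj V ⟶ f1)
    (hv : v1 ≫ uh = 𝟙 ((Functor.pi' (gfam Y)).obj V)) :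
    (fun j => eqToHom (gfam_obj_castSucc Y V j).symm ≫ v1 j.castSucc) ≫ uhFree V uh
      = 𝟙 Y := by
  funext j
  simp only [Pi.comp_apply, Pi.id_apply, uhFree]
  have hj : v1 j.castSucc ≫ uh j.castSucc
      = 𝟙 (((Functor.pi' (gfam Y)).obj V) j.castSucc) := congrFun hv j.castSucc
  delta Functor.pi'
  beta_reduce
  erw [Category.assoc, reassoc_of% hj, eqToHom_trans, eqToHom_refl]

lemma recompose_bound_sect {Y : CohTuple n} {f1 : CohTuple (n+1)} (V : CohTuple 1)
    (uh : f1 ⟶ (Functor.pi' (gfam Y)).obj V)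
    (v1 : (Functor.pi' (gfam Y)).obj V ⟶ f1)
    (hv : v1 ≫ uh = 𝟙 ((Functor.pi' (gfam Y)).obj V)) :
    (eqToHom (gfam_obj_last Y V).symm ≫ v1 (Fin.last n)) ≫ uhBound V uh = 𝟙 (V 0) := by
  have hl : v1 (Fin.last n) ≫ uh (Fin.last n)
      = 𝟙 (((Functor.pi' (gfam Y)).obj V) (Fin.last n)) := congrFun hv (Fin.last n)
  simp only [uhBound]
  delta Functor.pi'
  beta_reduce
  erw [Category.assoc, reassoc_of% hl, eqToHom_trans, eqToHom_refl]

lemma recompose_bound {Y : CohTuple n} {f1 : CohTuple (n+1)} (V : CohTuple 1)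
    (uh : f1 ⟶ (Functor.pi' (gfam Y)).obj V)
    (v1 : (Functor.pi' (gfam Y)).obj V ⟶ f1)
    (hv : v1 ≫ uh = 𝟙 ((Functor.pi' (gfam Y)).obj V)) :
    (Functor.pi' (gfam Y)).map (hom1 (A := V) (B := boundTuple f1)
        (eqToHom (gfam_obj_last Y V).symm ≫ v1 (Fin.last n)))
      = v1 ≫ tupleToGfam f1 ≫ extHomPi (uhFree V uh) (boundTuple f1) := by
  funext i
  simp only [Pi.comp_apply, pi'_gfam_map_apply, extHomPi_apply]
  induction i using Fin.lastCases with
  | last =>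
      rw [gfam_map_last, hom1_zero, extHom_last_eq,
        show tupleToGfam f1 (Fin.last n)
            = eqToHom (gfam_obj_last (freeTuple f1) (boundTuple f1)).symm by
          simp [tupleToGfam]; rfl]
      delta Functor.pi'
      beta_reduce
      simp
      erw [← Category.assoc, ← Category.assoc, eqToHom_trans, eqToHom_refl, Category.id_comp]
  | cast j =>
      rw [gfam_map_castSucc, extHom_castSucc_eq,
        show tupleToGfam f1 j.castSucc
            = eqToHom (gfam_obj_castSucc (freeTuple f1) (boundTuple f1) j).symm by
          (simp [tupleToGfam]; rfl),
        show uhFree V uh j = uh j.castSucc ≫ eqToHom (gfam_obj_castSucc Y V j) from rfl]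
      have hj : v1 j.castSucc ≫ uh j.castSucc
          = 𝟙 (((Functor.pi' (gfam Y)).obj V) j.castSucc) := congrFun hv j.castSucc
      delta Functor.pi'
      beta_reduce
      simp [reassoc_of% hj]
      erw [← Category.assoc, ← Category.assoc, hj, Category.id_comp, eqToHom_trans]

end Helpers5
-- STATEMENT 16
theorem stmt16 {n : ℕ} (F : CohTuple (n + 1) ⥤ CohSpace) (hF : IsNormalFunctor F)
    (G : CohTuple n ⥤ CohSpace) (hG : IsNormalFunctor G)
    (hobj : ∀ X, G.obj X = Tr (partialApp F X)) (hact : ForallAction F G hobj)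
    (e : Elts G) (he : IsNormalForm e) (c : CanonNF (partialApp F e.1))
    (hc : cast (congrArg CohSpace.web (hobj e.1)) e.2
        = Quotient.mk (traceSetoid (partialApp F e.1)) c) :
    IsNormalForm (F := F)
      ⟨(Functor.pi' (gfam e.1)).obj (canonTuple c.1), c.2.1⟩ := by
  haveI : PreservesLimitsOfShape WalkingCospan F := hF.2
  constructor
  · intro i
    induction i using Fin.lastCases with
    | last =>
        show Finite ((gfam e.1 (Fin.last n)).obj (canonTuple c.1)).web
        rw [gfam_obj_last]
        exact inferInstanceAs (Finite (Fin (c.1 0).k))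
    | cast j =>
        show Finite ((gfam e.1 j.castSucc).obj (canonTuple c.1)).web
        rw [gfam_obj_castSucc]
        exact he.1 j
  · intro f u
    obtain ⟨uh, hu⟩ := u
    have hu' : (F.map uh).toFun f.2 = c.2.1 := hu
    have hdec := uh_decomp (Y := e.1) (canonTuple c.1) uh
    -- the pushed element z2 over (e.1, W)
    have hκz : (F.map ((Functor.pi' (gfam e.1)).map
        (hom1 (A := boundTuple f.1) (B := canonTuple c.1)
          (uhBound (Y := e.1) (canonTuple c.1) uh)))).toFun
        ((F.map (tupleToGfam f.1
          ≫ extHomPi (uhFree (Y := e.1) (canonTuple c.1) uh) (boundTuple f.1))).toFun f.2)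
        = c.2.1 := by
      erw [← F_map_comp_apply, Category.assoc, hdec]
      exact hu'
    -- the bound section from the normal form property of c
    obtain ⟨σv, hσv, hσuniq⟩ := c.2.2.1.2
      ⟨boundTuple f.1, (F.map (tupleToGfam f.1
        ≫ extHomPi (uhFree (Y := e.1) (canonTuple c.1) uh) (boundTuple f.1))).toFun f.2⟩
      ⟨hom1 (A := boundTuple f.1) (B := canonTuple c.1)
        (uhBound (Y := e.1) (canonTuple c.1) uh), hκz⟩
    have hσm : σv.1 ≫ hom1 (A := boundTuple f.1) (B := canonTuple c.1)
        (uhBound (Y := e.1) (canonTuple c.1) uh) = 𝟙 (canonTuple c.1) :=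
      congrArg Subtype.val hσv
    have hσ0sect : σv.1 0 ≫ uhBound (Y := e.1) (canonTuple c.1) uh
        = 𝟙 (canonTuple c.1 0) := congrFun hσm 0
    -- obtain t over (freeTuple f.1, canonTuple c.1) via the pullback
    obtain ⟨t, ht1, ht2⟩ := exists_pullback_point F
      (uhFree (Y := e.1) (canonTuple c.1) uh) (σv.1) c.2.1
      ((F.map (tupleToGfam f.1)).toFun f.2)
      (by
        erw [← F_map_comp_apply]
        exact σv.2)
    -- t is a self-coherent normal form over freeTuple f.1
    have hnf : IsNormalForm (F := partialApp F (freeTuple f.1)) ⟨canonTuple c.1, t⟩ :=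
      nf_transfer F (uhFree (Y := e.1) (canonTuple c.1) uh) (canonTuple c.1) t
        (by rw [ht1]; exact c.2.2.1)
    have hcoh : NFCoherent (F := partialApp F (freeTuple f.1))
        ⟨canonTuple c.1, t⟩ ⟨canonTuple c.1, t⟩ :=
      coh_transfer F (uhFree (Y := e.1) (canonTuple c.1) uh) t t
        (by rw [ht1]; exact c.2.2.2)
    -- apply the functorial action
    obtain ⟨c', h1, h2, h3⟩ := hact (freeTuple f.1) e.1
      (uhFree (Y := e.1) (canonTuple c.1) uh)
      ⟨c.1, ⟨t, hnf, hcoh⟩⟩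
    have hc'e : c' = c := by
      obtain ⟨d', s'⟩ := c'
      have h2' : d' = c.1 := h2
      subst h2'
      have h3' : s'.1 = c.2.1 := (eq_of_heq h3).trans ht1
      have hs : s' = c.2 := Subtype.ext h3'
      rw [hs]
      rfl
    rw [hc'e] at h1
    have he2 : trWebCast hobj e.1 (Quotient.mk (traceSetoid (partialApp F e.1)) c)
        = e.2 := by
      rw [← hc]
      simp [trWebCast]
      exact cast_cast _ _ _
    have hqz : (G.map (uhFree (Y := e.1) (canonTuple c.1) uh)).toFun
        (trWebCast hobj (freeTuple f.1)
          (Quotient.mk (traceSetoid (partialApp F (freeTuple f.1))) ⟨c.1, ⟨t, hnf, hcoh⟩⟩))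
        = e.2 := h1.trans he2
    -- the free section from the normal form property of e
    obtain ⟨ρv, hρv, hρuniq⟩ := he.2
      ⟨freeTuple f.1, trWebCast hobj (freeTuple f.1)
        (Quotient.mk (traceSetoid (partialApp F (freeTuple f.1))) ⟨c.1, ⟨t, hnf, hcoh⟩⟩)⟩
      ⟨uhFree (Y := e.1) (canonTuple c.1) uh, hqz⟩
    have hρsect : ρv.1 ≫ uhFree (Y := e.1) (canonTuple c.1) uh = 𝟙 e.1 :=
      congrArg Subtype.val hρv
    -- assemble the section
    have hvsect : assembleV (canonTuple c.1) ρv.1 (σv.1 0) ≫ uh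
        = 𝟙 ((Functor.pi' (gfam e.1)).obj (canonTuple c.1)) :=
      assembleV_sect (canonTuple c.1) uh ρv.1 (σv.1 0) hρsect hσ0sect
    have hvelem : (F.map (assembleV (canonTuple c.1) ρv.1 (σv.1 0))).toFun c.2.1 = f.2 := by
      apply (F.map uh).inj
      erw [← F_map_comp_apply, hvsect, F_map_id_apply]
      exact hu'.symm
    refine ⟨⟨assembleV (canonTuple c.1) ρv.1 (σv.1 0), hvelem⟩, Subtype.ext hvsect, ?_⟩
    intro v' hv'
    apply Subtype.ext
    show v'.1 = assembleV (canonTuple c.1) ρv.1 (σv.1 0)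
    have hv1 : v'.1 ≫ uh = 𝟙 ((Functor.pi' (gfam e.1)).obj (canonTuple c.1)) :=
      congrArg Subtype.val hv'
    have hv2 : (F.map v'.1).toFun c.2.1 = f.2 := v'.2
    -- uniqueness of the free part
    have hρ'sect := recompose_free (canonTuple c.1) uh v'.1 hv1
    have hρ'cond : (G.map (fun j => eqToHom (gfam_obj_castSucc e.1 (canonTuple c.1) j).symm
          ≫ v'.1 j.castSucc)).toFun e.2
        = trWebCast hobj (freeTuple f.1)
          (Quotient.mk (traceSetoid (partialApp F (freeTuple f.1))) ⟨c.1, ⟨t, hnf, hcoh⟩⟩) := by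
      apply (G.map (uhFree (Y := e.1) (canonTuple c.1) uh)).inj
      erw [← F_map_comp_apply G, hρ'sect, F_map_id_apply]
      exact hqz.symm
    have hρeq : (fun j => eqToHom (gfam_obj_castSucc e.1 (canonTuple c.1) j).symm
        ≫ v'.1 j.castSucc) = ρv.1 :=
      congrArg Subtype.val (hρuniq ⟨_, hρ'cond⟩ (Subtype.ext hρ'sect))
    -- uniqueness of the bound part
    have hσ'sect0 := recompose_bound_sect (canonTuple c.1) uh v'.1 hv1
    have hσ'sect : hom1 (A := canonTuple c.1) (B := boundTuple f.1)
        (eqToHom (gfam_obj_last e.1 (canonTuple c.1)).symm ≫ v'.1 (Fin.last n))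
        ≫ hom1 (A := boundTuple f.1) (B := canonTuple c.1)
          (uhBound (Y := e.1) (canonTuple c.1) uh) = 𝟙 (canonTuple c.1) := by
      apply hom1_ext
      exact hσ'sect0
    have hσ'cond : (F.map ((Functor.pi' (gfam e.1)).map
        (hom1 (A := canonTuple c.1) (B := boundTuple f.1)
          (eqToHom (gfam_obj_last e.1 (canonTuple c.1)).symm ≫ v'.1 (Fin.last n))))).toFun c.2.1
        = (F.map (tupleToGfam f.1
          ≫ extHomPi (uhFree (Y := e.1) (canonTuple c.1) uh) (boundTuple f.1))).toFun f.2 := by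
      rw [recompose_bound (canonTuple c.1) uh v'.1 hv1]
      erw [F_map_comp_apply, hv2]
    have hσeq : hom1 (A := canonTuple c.1) (B := boundTuple f.1)
        (eqToHom (gfam_obj_last e.1 (canonTuple c.1)).symm ≫ v'.1 (Fin.last n)) = σv.1 :=
      congrArg Subtype.val (hσuniq ⟨_, hσ'cond⟩ (Subtype.ext hσ'sect))
    have hσ0eq : eqToHom (gfam_obj_last e.1 (canonTuple c.1)).symm ≫ v'.1 (Fin.last n)
        = σv.1 0 := congrFun hσeq 0
    refine (decomposeV_eq (canonTuple c.1) v'.1).trans ?_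
    rw [hρeq, hσ0eq]
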